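/- Every k-network in a k₂-space X is a Pytkeev network for X. -/

import Mathlib

open Set Filter Topology TopologicalSpace

/-- A set `A` accumulates at `x` if every neighborhood of `x` contains
infinitely many points of `A`. -/
def AccumulatesAt {X : Type*} [TopologicalSpace X] (A : Set X) (x : X) : Prop :=
  ∀ U ∈ 𝓝 x, (U ∩ A).Infinite

/-- `𝒩` is a network: for each point and open neighborhood there is a member of `𝒩`
containing the point and contained in the neighborhood. -/
def IsNetwork {X : Type*} [TopologicalSpace X] (𝒩 : Set (Set X)) : Prop :=
  ∀ (x : X) (U : Set X), IsOpen U → x ∈ U → ∃ N ∈ 𝒩, x ∈ N ∧ N ⊆ U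

/-- `𝒩` is a Pytkeev network. -/
def IsPytkeevNetwork {X : Type*} [TopologicalSpace X] (𝒩 : Set (Set X)) : Prop :=
  IsNetwork 𝒩 ∧ ∀ (x : X) (U : Set X), IsOpen U → x ∈ U →
    ∀ A : Set X, AccumulatesAt A x → ∃ N ∈ 𝒩, N ⊆ U ∧ (N ∩ A).Infinite

/-- `𝒩` is a k-network. -/
def IsKNetwork {X : Type*} [TopologicalSpace X] (𝒩 : Set (Set X)) : Prop :=
  ∀ (U K : Set X), IsOpen U → IsCompact K → K ⊆ U →
    ∃ F ⊆ 𝒩, F.Finite ∧ K ⊆ ⋃₀ F ∧ ⋃₀ F ⊆ U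

/-- Every k-network in a k₂-space is a Pytkeev network. -/
theorem kNetwork_isPytkeevNetwork_of_k2 {X : Type*} [TopologicalSpace X]
    (hk2 : ∀ A : Set X, ¬ IsClosed A → ∃ K : Set X, IsCompact K ∧ T2Space ↥K ∧
      ¬ IsClosed ((Subtype.val ⁻¹' A : Set ↥K)))
    (𝒩 : Set (Set X)) (h : IsKNetwork 𝒩) :
    IsPytkeevNetwork 𝒩 := by
  constructor
  · -- network
    intro x U hU hxU
    obtain ⟨F, hF𝒩, _, hcov, hsub⟩ := h U {x} hU isCompact_singleton (by simpa)
    obtain ⟨N, hNF, hxN⟩ := hcov (mem_singleton x)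
    exact ⟨N, hF𝒩 hNF, hxN, fun y hy => hsub ⟨N, hNF, hy⟩⟩
  · intro x U hU hxU A hA
    set B : Set X := (U ∩ A) \ {x} with hB
    -- x is in the closure of B
    have hxclB : x ∈ closure B := by
      rw [mem_closure_iff_nhds]
      intro V hV
      have hinf : (V ∩ U ∩ A).Infinite := hA _ (inter_mem hV (hU.mem_nhds hxU))
      have : ((V ∩ U ∩ A) \ {x}).Infinite := hinf.diff (finite_singleton x)
      obtain ⟨y, hy⟩ := this.nonempty
      exact ⟨y, ⟨hy.1.1.1, ⟨hy.1.1.2, hy.1.2⟩, hy.2⟩⟩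
    set D : Set X := B ∪ Uᶜ with hD
    have hxD : x ∉ D := by
      rintro (hx | hx)
      · exact hx.2 rfl
      · exact hx hxU
    have hDnc : ¬ IsClosed D := by
      intro hc
      exact hxD (hc.closure_subset (closure_mono subset_union_left hxclB))
    obtain ⟨K, hKcomp, hKT2, hKnc⟩ := hk2 D hDnc
    haveI : T2Space ↥K := hKT2
    haveI : CompactSpace ↥K := isCompact_iff_compactSpace.mp hKcomp
    set D' : Set ↥K := Subtype.val ⁻¹' D with hD'
    -- pick z in the closure of D' not in D'
    have : ∃ z, z ∈ closure D' ∧ z ∉ D' := by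
      by_contra hcon
      push_neg at hcon
      have : closure D' ⊆ D' := fun z hz => hcon z hz
      exact hKnc (isClosed_of_closure_subset this)
    obtain ⟨z, hzcl, hzD⟩ := this
    set B' : Set ↥K := Subtype.val ⁻¹' B with hB'
    have hUc' : IsClosed (Subtype.val ⁻¹' Uᶜ : Set ↥K) :=
      (hU.isClosed_compl).preimage continuous_subtype_val
    have hzU : (z : X) ∈ U := by
      by_contra hz
      exact hzD (Or.inr hz)
    have hzB : z ∉ B' := fun hz => hzD (Or.inl hz)
    have hzclB' : z ∈ closure B' := by
      have : closure D' ⊆ closure B' ∪ Subtype.val ⁻¹' Uᶜ := by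
        have : D' = B' ∪ Subtype.val ⁻¹' Uᶜ := rfl
        rw [this]
        rw [closure_union, hUc'.closure_eq]
      rcases this hzcl with hc | hc
      · exact hc
      · exact absurd hzU hc
    -- every neighborhood of z in K meets B' in an infinite set
    have hinf : ∀ V ∈ 𝓝 z, (V ∩ B').Infinite := by
      intro V hV
      by_contra hfin
      rw [Set.not_infinite] at hfin
      have hclosedfin : IsClosed (V ∩ B') := hfin.isClosed
      have hV' : V \ (V ∩ B') ∈ 𝓝 z := by
        rw [diff_eq]
        refine inter_mem hV ?_
        exact hclosedfin.isOpen_compl.mem_nhds (fun hz => hzB hz.2)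
      obtain ⟨y, hyV, hyB⟩ := mem_closure_iff_nhds.mp hzclB' _ hV'
      exact hyV.2 ⟨hyV.1, hyB⟩
    -- regularity: closed (compact) neighborhood inside U
    have hU' : IsOpen (Subtype.val ⁻¹' U : Set ↥K) := hU.preimage continuous_subtype_val
    obtain ⟨C', hC'nhds, hC'closed, hC'sub⟩ :=
      exists_mem_nhds_isClosed_subset (hU'.mem_nhds hzU)
    have hC'comp : IsCompact C' := hC'closed.isCompact
    set C : Set X := Subtype.val '' C' with hC
    have hCcomp : IsCompact C := hC'comp.image continuous_subtype_val
    have hCsubU : C ⊆ U := by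
      rintro _ ⟨y, hy, rfl⟩
      exact hC'sub hy
    have hCBinf : (C ∩ B).Infinite := by
      have h1 : ((C' ∩ B').image Subtype.val).Infinite :=
        (hinf C' hC'nhds).image (Set.injOn_of_injective Subtype.val_injective)
      refine h1.mono ?_
      rintro _ ⟨y, ⟨hyC, hyB⟩, rfl⟩
      exact ⟨⟨y, hyC, rfl⟩, hyB⟩
    obtain ⟨F, hF𝒩, hFfin, hcov, hsub⟩ := h U C hU hCcomp hCsubU
    -- pigeonhole: some N ∈ F has infinite intersection with B
    have : ∃ N ∈ F, (N ∩ B).Infinite := by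
      by_contra hcon
      push_neg at hcon
      replace hcon : ∀ N ∈ F, (N ∩ B).Finite := fun N hN => by simpa using hcon N hN
      have hfin : (⋃ N ∈ F, (N ∩ B)).Finite := hFfin.biUnion hcon
      refine hCBinf (hfin.subset ?_)
      rintro y ⟨hyC, hyB⟩
      obtain ⟨N, hNF, hyN⟩ := hcov hyC
      exact mem_biUnion hNF ⟨hyN, hyB⟩
    obtain ⟨N, hNF, hNB⟩ := this
    refine ⟨N, hF𝒩 hNF, fun y hy => hsub ⟨N, hNF, hy⟩, ?_⟩
    exact hNB.mono (fun y hy => ⟨hy.1, hy.2.1.2⟩)
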